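/- Let α ∈ (0,1), β = 1 − α, and define H(s) = αs/(1 − βs) for s ∈ [0,1] (the generating function of a Geometric(α) random variable) and f(s) = 1 − H(s). Then f maps [0,1] to [0,1] and f(f(s)) = s for every s ∈ [0,1]; consequently every pair (s, f(s)) is a two-cycle of f, and f has a unique fixed point in [0,1], namely s = 1/(1 + √α) (the unique root in (0,1) of H(s) + s = 1). -/

import Mathlib

open Filter Topology

/-- for the Geometric(α) generating function `H(s) = αs/(1 - βs)` (with
`β = 1 - α`) and `f(s) = 1 - H(s)`, the map `f` sends `[0,1]` to `[0,1]`, satisfies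
`f (f s) = s` on `[0,1]` (so every pair `(s, f s)` is a two-cycle), and has a unique fixed
point in `[0,1]`, namely `s = 1/(1 + √α)` (the unique root in `(0,1)` of `H(s) + s = 1`). -/
theorem geometric_involution (α : ℝ) (hα : α ∈ Set.Ioo (0 : ℝ) 1)
    (β : ℝ) (hβ : β = 1 - α)
    (H : ℝ → ℝ) (hH : ∀ s, H s = α * s / (1 - β * s))
    (f : ℝ → ℝ) (hf : ∀ s, f s = 1 - H s) :
    (∀ s ∈ Set.Icc (0 : ℝ) 1, f s ∈ Set.Icc (0 : ℝ) 1) ∧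
    (∀ s ∈ Set.Icc (0 : ℝ) 1, f (f s) = s) ∧
    (∀ s ∈ Set.Icc (0 : ℝ) 1, f s = s ↔ s = 1 / (1 + Real.sqrt α)) := by
  obtain ⟨hα0, hα1⟩ := hα
  have hβ0 : 0 < β := by simp [hβ]; linarith
  have hβ1 : β < 1 := by simp [hβ]; linarith
  have hden : ∀ s ∈ Set.Icc (0 : ℝ) 1, 0 < 1 - β * s := by
    intro s ⟨hs0, hs1⟩; nlinarith
  have hfs : ∀ s ∈ Set.Icc (0 : ℝ) 1, f s = (1 - s) / (1 - β * s) := by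
    intro s hs
    have hd := hden s hs
    rw [hf, hH]
    have : 1 - s * β ≠ 0 := by linarith
    field_simp
    rw [hβ]; ring
  have hmap : ∀ s ∈ Set.Icc (0 : ℝ) 1, f s ∈ Set.Icc (0 : ℝ) 1 := by
    intro s hs
    obtain ⟨hs0, hs1⟩ := hs
    have hd := hden s ⟨hs0, hs1⟩
    rw [hfs s ⟨hs0, hs1⟩]
    constructor
    · exact div_nonneg (by linarith) hd.le
    · rw [div_le_one hd]; nlinarith
  refine ⟨hmap, ?_, ?_⟩
  · intro s hs
    obtain ⟨hs0, hs1⟩ := hs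
    have hd := hden s ⟨hs0, hs1⟩
    have hm := hmap s ⟨hs0, hs1⟩
    have hd2 := hden (f s) hm
    rw [hfs (f s) hm, hfs s ⟨hs0, hs1⟩]
    rw [hfs s ⟨hs0, hs1⟩] at hd2
    subst hβ
    have hαne : α ≠ 0 := hα0.ne'
    have : 1 - s * (1 - α) ≠ 0 := by linarith
    field_simp
    ring_nf
    field_simp
  · intro s hs
    obtain ⟨hs0, hs1⟩ := hs
    have hd := hden s ⟨hs0, hs1⟩
    set t := Real.sqrt α with ht
    have ht0 : 0 < t := Real.sqrt_pos.mpr hα0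
    have ht1 : t < 1 := by
      rw [ht, show (1:ℝ) = Real.sqrt 1 by simp]
      exact Real.sqrt_lt_sqrt hα0.le hα1
    have ht2 : t ^ 2 = α := Real.sq_sqrt hα0.le
    have h1t : (0:ℝ) < 1 + t := by linarith
    constructor
    · intro hfix
      rw [hfs s ⟨hs0, hs1⟩] at hfix
      have heq : 1 - s = s * (1 - β * s) := by
        have : 1 - s * β ≠ 0 := by linarith
        field_simp at hfix; linarith [hfix]
      -- β s² - 2s + 1 = 0, i.e. ((1+t)s - 1)((1-t)s - 1) = 0
      have hfac : ((1 + t) * s - 1) * ((1 - t) * s - 1) = 0 := by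
        rw [hβ] at heq; nlinarith [heq, ht2]
      rcases mul_eq_zero.mp hfac with h | h
      · field_simp
        linarith
      · exfalso; nlinarith
    · intro hval
      subst hval
      rw [hfs _ ⟨hs0, hs1⟩]
      rw [hβ] at hd ⊢
      rw [div_eq_div_iff hd.ne' h1t.ne']
      field_simp
      nlinarith [ht2]
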